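/- The unnormalized graph operator depends only on the isomorphism class of the two-fold graph: for every N ∈ ℕ, every m ∈ ℕ, all α, β, α', β' : Fin m → ℕ, if there exist a permutation π of Fin m and injective maps f, g : ℕ → ℕ such that α' = f ∘ α ∘ π and β' = g ∘ β ∘ π, then Ṽ_N(α', β') = Ṽ_N(α, β) as ℂ-linear operators on R. -/

import Mathlib

open MvPolynomial

noncomputable abbrev R : Type := MvPolynomial (ℕ × ℕ) ℂ

/-- The `gl(∞)` generator `D_N(a,b) p = ∑_{e<N} X_{(a,e)} ∂p/∂X_{(b,e)}`. -/
noncomputable def Dop (N a b : ℕ) : R →ₗ[ℂ] R :=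
  ∑ e ∈ Finset.range N,
    (LinearMap.mulLeft ℂ (X (a, e))) ∘ₗ (pderiv ((b, e) : ℕ × ℕ)).toLinearMap

/-- The normally ordered operator `V_N(a|b)`. -/
noncomputable def Vop (N : ℕ) {m : ℕ} (a b : Fin m → ℕ) : R →ₗ[ℂ] R :=
  ∑ e : Fin m → Fin N,
    (LinearMap.mulLeft ℂ (∏ i, X (a i, (e i : ℕ)))) ∘ₗ
      (List.ofFn fun i => (pderiv ((b i, (e i : ℕ)) : ℕ × ℕ)).toLinearMap).prod

/-- The cut-and-join operator `W_N(σ) = ∑_a V_N(a | a∘σ)`. -/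
noncomputable def Wop (N : ℕ) {m : ℕ} (σ : Equiv.Perm (Fin m)) : R →ₗ[ℂ] R :=
  ∑ a : Fin m → Fin N, Vop N (fun i => (a i : ℕ)) (fun i => (a (σ i) : ℕ))

/-- Compatibility of index tuples with a two-fold graph. -/
def Compatible {N m : ℕ} (α β : Fin m → ℕ) (a b : Fin m → Fin N) : Prop :=
  (∀ i j, a i = a j ↔ α i = α j) ∧ (∀ i j, b i = b j ↔ β i = β j)

instance {N m : ℕ} (α β : Fin m → ℕ) (a b : Fin m → Fin N) :
    Decidable (Compatible α β a b) :=
  inferInstanceAs (Decidable (_ ∧ _))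

/-- The unnormalized graph operator `Ṽ_N(α,β)`. -/
noncomputable def Vt (N : ℕ) {m : ℕ} (α β : Fin m → ℕ) : R →ₗ[ℂ] R :=
  ∑ p ∈ Finset.univ.filter
      (fun p : (Fin m → Fin N) × (Fin m → Fin N) => Compatible α β p.1 p.2),
    Vop N (fun i => (p.1 i : ℕ)) (fun i => (p.2 i : ℕ))

lemma pderiv_comm' {σ : Type*} [DecidableEq σ] (i j : σ) (p : MvPolynomial σ ℂ) :
    pderiv i (pderiv j p) = pderiv j (pderiv i p) := by
  induction p using MvPolynomial.induction_on' with
  | add p q hp hq => simp [hp, hq]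
  | monomial s a =>
    rcases eq_or_ne i j with rfl | hij
    · rfl
    · simp only [pderiv_monomial, Finsupp.tsub_apply,
        Finsupp.single_eq_of_ne hij, Finsupp.single_eq_of_ne (Ne.symm hij),
        Nat.sub_zero, tsub_right_comm]
      ring_nf

lemma pderiv_commute (x y : ℕ × ℕ) :
    Commute ((pderiv x).toLinearMap : R →ₗ[ℂ] R) (pderiv y).toLinearMap := by
  refine LinearMap.ext fun p => ?_
  exact pderiv_comm' x y p

lemma prod_ofFn_perm {m : ℕ} (F : Fin m → (R →ₗ[ℂ] R)) (π : Equiv.Perm (Fin m))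
    (hc : ∀ i j, Commute (F i) (F j)) :
    (List.ofFn (F ∘ π)).prod = (List.ofFn F).prod :=
  (π.ofFn_comp_perm F).prod_eq' (List.pairwise_ofFn.2 fun i j _ => hc _ _)

lemma Vop_comp_perm (N : ℕ) {m : ℕ} (a b : Fin m → ℕ) (π : Equiv.Perm (Fin m)) :
    Vop N (a ∘ π) (b ∘ π) = Vop N a b := by
  unfold Vop
  refine Fintype.sum_equiv (Equiv.arrowCongr π (Equiv.refl (Fin N))) _ _ fun e => ?_
  have h1 : (∏ i, (X (a (π i), (e i : ℕ)) : R)) =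
      ∏ i, X (a i, ((e (π.symm i) : Fin N) : ℕ)) := by
    rw [← Equiv.prod_comp π (fun i => (X (a i, ((e (π.symm i) : Fin N) : ℕ)) : R))]
    simp
  have h2 : (List.ofFn fun i => ((pderiv ((b (π i), (e i : ℕ)) : ℕ × ℕ)).toLinearMap
      : R →ₗ[ℂ] R)).prod =
      (List.ofFn fun i => ((pderiv ((b i, ((e (π.symm i) : Fin N) : ℕ)) : ℕ × ℕ)).toLinearMap
      : R →ₗ[ℂ] R)).prod := by
    have h := prod_ofFn_perm
      (fun i => ((pderiv ((b i, ((e (π.symm i) : Fin N) : ℕ)) : ℕ × ℕ)).toLinearMap : R →ₗ[ℂ] R))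
      π (fun i j => pderiv_commute _ _)
    simp only [Function.comp_def, Equiv.symm_apply_apply] at h
    exact h
  simp only [Function.comp, Equiv.arrowCongr_apply, Equiv.refl_symm, Equiv.coe_refl]
  rw [h1, h2]
  rfl

lemma compat_iff {N m : ℕ} (α β α' β' : Fin m → ℕ)
    (π : Equiv.Perm (Fin m)) (f g : ℕ → ℕ)
    (hf : Function.Injective f) (hg : Function.Injective g)
    (hα : α' = f ∘ α ∘ π) (hβ : β' = g ∘ β ∘ π) (a b : Fin m → Fin N) :
    Compatible α' β' a b ↔ Compatible α β (a ∘ π.symm) (b ∘ π.symm) := by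
  subst hα hβ
  constructor
  · rintro ⟨h1, h2⟩
    refine ⟨fun i j => ?_, fun i j => ?_⟩
    · simpa [hf.eq_iff] using h1 (π.symm i) (π.symm j)
    · simpa [hg.eq_iff] using h2 (π.symm i) (π.symm j)
  · rintro ⟨h1, h2⟩
    refine ⟨fun i j => ?_, fun i j => ?_⟩
    · simpa [Function.comp, hf.eq_iff] using h1 (π i) (π j)
    · simpa [Function.comp, hg.eq_iff] using h2 (π i) (π j)


/-- `Ṽ_N` depends only on the isomorphism class of the two-fold graph. -/
theorem Vt_iso_invariant (N m : ℕ) (α β α' β' : Fin m → ℕ)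
    (π : Equiv.Perm (Fin m)) (f g : ℕ → ℕ)
    (hf : Function.Injective f) (hg : Function.Injective g)
    (hα : α' = f ∘ α ∘ π) (hβ : β' = g ∘ β ∘ π) :
    Vt N α' β' = Vt N α β := by
  unfold Vt
  refine Finset.sum_bij' (fun p _ => (p.1 ∘ ⇑π.symm, p.2 ∘ ⇑π.symm))
    (fun p _ => (p.1 ∘ ⇑π, p.2 ∘ ⇑π)) ?_ ?_ ?_ ?_ ?_
  · intro p hp
    simp only [Finset.mem_filter, Finset.mem_univ, true_and] at hp ⊢
    exact (compat_iff α β α' β' π f g hf hg hα hβ p.1 p.2).1 hp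
  · intro p hp
    simp only [Finset.mem_filter, Finset.mem_univ, true_and] at hp ⊢
    refine (compat_iff α β α' β' π f g hf hg hα hβ _ _).2 ?_
    simpa [Function.comp_def] using hp
  · intro p hp
    ext i <;> simp
  · intro p hp
    ext i <;> simp
  · intro p hp
    have h := Vop_comp_perm N (fun i => ((p.1 (π.symm i) : ℕ)))
      (fun i => ((p.2 (π.symm i) : ℕ))) π
    simp only [Function.comp_def, Equiv.symm_apply_apply] at h
    exact h
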